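/- For every j ∈ {1,…,r}, the sum of the determinants of all j×j principal submatrices of M equals the partition function of j hard particles on the graph 𝒢_A: ∑_{S ⊆ {1,…,r+1}, |S| = j} det(M_{S,S}) = ∑_{C ⊆ {1,…,2r+1} admissible, |C| = j} ∏_{i∈C} y_i. (Theorem 5.8 together with Lemma 5.5 and Proposition 5.6: the type-A Coxeter–Toda Hamiltonian f_j^{c,c} = tr(∧^j ·) on the conjugation quotient Coxeter double Bruhat cell of SL_{r+1} as a hard-particle partition function.) -/

import Mathlib

open Classical

noncomputable section

/-- `E_i(a) = Id + a·e_{i,i+1}` (with 1-based index `i`), as an `(r+1)×(r+1)` complex matrix. -/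
def EupA (r i : ℕ) (a : ℂ) : Matrix (Fin (r + 1)) (Fin (r + 1)) ℂ :=
  Matrix.of fun p q : Fin (r + 1) =>
    (if p = q then (1 : ℂ) else 0) + (if (p : ℕ) + 1 = i ∧ (q : ℕ) = i then a else 0)

/-- `E_{-i}(b) = Id + b·e_{i+1,i}` (with 1-based index `i`). -/
def ElowA (r i : ℕ) (b : ℂ) : Matrix (Fin (r + 1)) (Fin (r + 1)) ℂ :=
  Matrix.of fun p q : Fin (r + 1) =>
    (if p = q then (1 : ℂ) else 0) + (if (p : ℕ) = i ∧ (q : ℕ) + 1 = i then b else 0)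

/-- `D = diag(t_1, t_2/t_1, …, t_r/t_{r-1}, 1/t_r)`, using `t_0 = t_{r+1} = 1`. -/
def DA (r : ℕ) (t : ℕ → ℂ) : Matrix (Fin (r + 1)) (Fin (r + 1)) ℂ :=
  Matrix.diagonal fun p : Fin (r + 1) => t ((p : ℕ) + 1) / t (p : ℕ)

/-- Admissible subsets (hard-particle configurations on the graph `𝒢_A`):
for all `a < b` in `S`, `b - a ≥ 2`, and `b - a ≥ 3` whenever `a` is even. -/
def AdmissibleA (S : Finset ℕ) : Prop :=
  ∀ a ∈ S, ∀ b ∈ S, a < b → a + 2 ≤ b ∧ (Even a → a + 3 ≤ b)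

/-- The sum of the determinants of all `j×j` principal submatrices of `M`. -/
def principalMinorSum {n : ℕ} (M : Matrix (Fin n) (Fin n) ℂ) (j : ℕ) : ℂ :=
  ∑ S ∈ (Finset.univ : Finset (Fin n)).powersetCard j,
    (M.submatrix (fun x : {a : Fin n // a ∈ S} => x.1)
      (fun x : {a : Fin n // a ∈ S} => x.1)).det


def MentN (t c : ℕ → ℂ) (p q : ℕ) : ℂ :=
  if p = q + 1 then t p / t q
  else if p ≤ q then
    ((if p = 0 then 0 else c p * t p / t (p - 1)) + t (p + 1) / t p) *
      ∏ m ∈ Finset.Ico p q, c (m + 1)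
  else 0

lemma MentN_zero (t c : ℕ → ℂ) {p q : ℕ} (h : q + 1 < p) : MentN t c p q = 0 := by
  unfold MentN
  rw [if_neg (by omega), if_neg (by omega)]

lemma MentN_diag (t c : ℕ → ℂ) (p : ℕ) :
    MentN t c p p = (if p = 0 then 0 else c p * t p / t (p - 1)) + t (p + 1) / t p := by
  unfold MentN
  rw [if_neg (by omega), if_pos le_rfl, Finset.Ico_self, Finset.prod_empty, mul_one]

lemma MentN_sub (t c : ℕ → ℂ) (q : ℕ) : MentN t c (q + 1) q = t (q + 1) / t q := by
  unfold MentN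
  rw [if_pos rfl]

lemma MentN_le (t c : ℕ → ℂ) {p q : ℕ} (h : p ≤ q) :
    MentN t c p q = ((if p = 0 then 0 else c p * t p / t (p - 1)) + t (p + 1) / t p) *
      ∏ m ∈ Finset.Ico p q, c (m + 1) := by
  unfold MentN
  rw [if_neg (by omega), if_pos h]

lemma MentN_succcol (t c : ℕ → ℂ) {p q : ℕ} (h : p ≤ q) :
    MentN t c p (q + 1) = c (q + 1) * MentN t c p q := by
  rw [MentN_le t c h, MentN_le t c (by omega : p ≤ q + 1), Finset.prod_Ico_succ_top h]
  ring

/-- weight of an element in the principal-minor product formula -/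
def wPMN (t c : ℕ → ℂ) {j : ℕ} (f : Fin j → ℕ) (i : Fin j) : ℂ :=
  (if 0 < f i ∧ (∀ k, f k + 1 ≠ f i) then c (f i) * t (f i) / t (f i - 1) else 0)
    + t (f i + 1) / t (f i)

lemma detL (t c : ℕ → ℂ) : ∀ (j : ℕ) (f : Fin j → ℕ), StrictMono f →
    (Matrix.of fun i k : Fin j => MentN t c (f i) (f k)).det = ∏ i, wPMN t c f i := by
  intro j
  induction j with
  | zero => intro f _; simp [Matrix.det_fin_zero]
  | succ j ih =>
    rcases j with _ | j'
    · intro f _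
      rw [Matrix.det_fin_one, Fin.prod_univ_one]
      have h1 : ∀ k : Fin 1, k = 0 := fun k => Subsingleton.elim _ _
      unfold wPMN
      simp only [Matrix.of_apply, MentN_diag]
      have h2 : (∀ k : Fin 1, f k + 1 ≠ f 0) := by
        intro k; rw [h1 k]; omega
      rcases Nat.eq_zero_or_pos (f 0) with h0 | h0
      · rw [if_pos h0, if_neg (fun hc => absurd hc.1 (by omega))]
      · rw [if_neg (by omega), if_pos ⟨h0, h2⟩, add_comm]
    · intro f hf
      set A : Matrix (Fin (j'+2)) (Fin (j'+2)) ℂ :=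
        Matrix.of fun i k : Fin (j'+2) => MentN t c (f i) (f k) with hA
      set pen : Fin (j'+2) := (Fin.last j').castSucc with hpen
      have hpenval : (pen : ℕ) = j' := rfl
      have hlastval : ((Fin.last (j'+1)) : ℕ) = j' + 1 := rfl
      have hpenlt : pen < Fin.last (j'+1) := by
        rw [Fin.lt_def]; simp [hpenval]
      have hfp : f pen < f (Fin.last (j'+1)) := hf hpenlt
      have hfl0 : 0 < f (Fin.last (j'+1)) := by omega
      -- the submatrix P and its determinant via the induction hypothesis
      have hPdet : (A.submatrix Fin.castSucc Fin.castSucc).det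
          = ∏ i : Fin (j'+1), wPMN t c (f ∘ Fin.castSucc) i :=
        ih (f ∘ Fin.castSucc) (hf.comp Fin.strictMono_castSucc)
      have hwcomp : ∀ i : Fin (j'+1), wPMN t c (f ∘ Fin.castSucc) i = wPMN t c f i.castSucc := by
        intro i
        unfold wPMN
        have hcond : (0 < f i.castSucc ∧ ∀ k : Fin (j'+1), f k.castSucc + 1 ≠ f i.castSucc)
            = (0 < f i.castSucc ∧ ∀ k : Fin (j'+2), f k + 1 ≠ f i.castSucc) := by
          apply propext
          constructor
          · rintro ⟨h0, hk⟩
            refine ⟨h0, fun k => ?_⟩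
            induction k using Fin.lastCases with
            | last =>
              have := hf (Fin.castSucc_lt_last i)
              omega
            | cast k => exact hk k
          · rintro ⟨h0, hk⟩
            exact ⟨h0, fun k => hk _⟩
        simp only [Function.comp_apply]
        congr 1
        exact if_congr (iff_of_eq hcond) rfl rfl
      have hwlast : ∀ i : Fin (j'+1), wPMN t c f i.castSucc = wPMN t c f i.castSucc := fun _ => rfl
      -- Laplace expansion along the last row
      rw [Matrix.det_succ_row A (Fin.last (j'+1)), Fin.sum_univ_castSucc, Fin.sum_univ_castSucc]
      simp only [Fin.succAbove_last]
      -- the terms with column index < j' vanish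
      have hzero : ∀ i : Fin j',
          A (Fin.last (j'+1)) (i.castSucc.castSucc) = 0 := by
        intro i
        have h1 : f (i.castSucc.castSucc) < f pen := by
          apply hf
          rw [Fin.lt_def]
          simpa [hpenval] using i.isLt
        exact MentN_zero t c (by omega)
      rw [Finset.sum_eq_zero (fun i _ => by rw [hzero i]; ring), zero_add]
      -- signs
      have hs1 : ((-1 : ℂ)) ^ (((Fin.last (j'+1)) : ℕ) + ((Fin.last (j'+1)) : ℕ)) = 1 :=
        Even.neg_one_pow ⟨j' + 1, rfl⟩
      have hs2 : ((-1 : ℂ)) ^ (((Fin.last (j'+1)) : ℕ) + ((pen : Fin (j'+2)) : ℕ)) = -1 :=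
        Odd.neg_one_pow ⟨j', by omega⟩
      have hfin : ((Fin.last j').castSucc : Fin (j'+2)) = pen := rfl
      rw [hfin, hs1, hs2]
      -- diagonal entry
      have hdiag : A (Fin.last (j'+1)) (Fin.last (j'+1))
          = (if f (Fin.last (j'+1)) = 0 then 0
              else c (f (Fin.last (j'+1))) * t (f (Fin.last (j'+1))) / t (f (Fin.last (j'+1)) - 1))
            + t (f (Fin.last (j'+1)) + 1) / t (f (Fin.last (j'+1))) := MentN_diag t c _
      -- product splitting on the right-hand side
      rw [Fin.prod_univ_castSucc (fun i : Fin (j'+2) => wPMN t c f i)]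
      by_cases hadj : f pen + 1 = f (Fin.last (j'+1))
      · -- adjacent case
        have hsub : A (Fin.last (j'+1)) pen = t (f (Fin.last (j'+1))) / t (f pen) := by
          show MentN t c (f (Fin.last (j'+1))) (f pen) = _
          rw [← hadj, MentN_sub]
        have hminor : A.submatrix Fin.castSucc (Fin.succAbove pen)
            = (A.submatrix Fin.castSucc Fin.castSucc).updateCol (Fin.last j')
                ((c (f (Fin.last (j'+1)))) • fun b => (A.submatrix Fin.castSucc Fin.castSucc) b (Fin.last j')) := by
          ext b k
          by_cases hk : k = Fin.last j'
          · subst hk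
            rw [Matrix.updateCol_self]
            have hsa : Fin.succAbove pen (Fin.last j') = Fin.last (j'+1) := by
              rw [Fin.succAbove_of_le_castSucc _ _ (le_of_eq hpen), Fin.succ_last]
            have hble : f b.castSucc ≤ f pen := by
              apply hf.monotone
              rw [Fin.le_def]
              simpa [hpenval] using Nat.lt_succ_iff.mp b.isLt
            show MentN t c (f b.castSucc) (f (Fin.succAbove pen (Fin.last j')))
              = c (f (Fin.last (j'+1))) * MentN t c (f b.castSucc) (f pen)
            rw [hsa, ← hadj, MentN_succcol t c hble]
          · rw [Matrix.updateCol_ne hk]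
            have hkv : (k : ℕ) < j' := by
              rcases Nat.lt_succ_iff_lt_or_eq.mp k.isLt with h | h
              · exact h
              · exact absurd (Fin.ext h) hk
            have hsa : Fin.succAbove pen k = k.castSucc :=
              Fin.succAbove_of_castSucc_lt _ _ (by rw [Fin.lt_def]; simpa [hpenval] using hkv)
            show A b.castSucc (Fin.succAbove pen k) = A b.castSucc k.castSucc
            rw [hsa]
        rw [hsub, hminor, Matrix.det_updateCol_smul, Matrix.updateCol_eq_self, hPdet]
        have hwl : wPMN t c f (Fin.last (j'+1)) =
            t (f (Fin.last (j'+1)) + 1) / t (f (Fin.last (j'+1))) := by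
          unfold wPMN
          rw [if_neg (fun hc => (hc.2 pen) hadj), zero_add]
        rw [hwl, hdiag, Finset.prod_congr rfl (fun i _ => hwcomp i)]
        rw [if_neg (by omega)]
        have hfl1 : f (Fin.last (j'+1)) - 1 = f pen := by omega
        rw [hfl1]
        ring
      · -- non-adjacent case : the subdiagonal entry vanishes
        have hsub : A (Fin.last (j'+1)) pen = 0 := MentN_zero t c (by omega)
        rw [hsub, hPdet, Finset.prod_congr rfl (fun i _ => hwcomp i)]
        have hwl : wPMN t c f (Fin.last (j'+1)) =
            c (f (Fin.last (j'+1))) * t (f (Fin.last (j'+1))) / t (f (Fin.last (j'+1)) - 1)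
              + t (f (Fin.last (j'+1)) + 1) / t (f (Fin.last (j'+1))) := by
          unfold wPMN
          rw [if_pos]
          refine ⟨hfl0, fun k => ?_⟩
          induction k using Fin.lastCases with
          | last => omega
          | cast k =>
            have hkle : f k.castSucc ≤ f pen := by
              apply hf.monotone
              rw [Fin.le_def]
              simpa [hpenval] using Nat.lt_succ_iff.mp k.isLt
            omega
        rw [hwl, hdiag, if_neg (by omega)]
        ring



lemma lowProd (r : ℕ) : ∀ s, s ≤ r →
    (((List.range s).map fun m => ElowA r (m + 1) 1).prod) =
      Matrix.of (fun p q : Fin (r + 1) =>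
        (if p = q then (1 : ℂ) else 0) +
          (if (p : ℕ) = (q : ℕ) + 1 ∧ (p : ℕ) ≤ s then 1 else 0)) := by
  intro s
  induction s with
  | zero =>
    intro _
    ext p q
    simp only [List.range_zero, List.map_nil, List.prod_nil, Matrix.one_apply, Matrix.of_apply]
    have : ¬((p : ℕ) = (q : ℕ) + 1 ∧ (p : ℕ) ≤ 0) := by omega
    rw [if_neg this, add_zero]
  | succ s ih =>
    intro hs
    rw [List.range_succ, List.map_append, List.prod_append, List.map_singleton,
      List.prod_singleton, ih (by omega)]
    ext p q
    rw [Matrix.mul_apply]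
    have hK : ((⟨s + 1, by omega⟩ : Fin (r + 1)) : ℕ) = s + 1 := rfl
    have hsummand : ∀ k : Fin (r + 1),
        (Matrix.of (fun p q : Fin (r + 1) =>
          (if p = q then (1 : ℂ) else 0) +
            (if (p : ℕ) = (q : ℕ) + 1 ∧ (p : ℕ) ≤ s then 1 else 0))) p k * ElowA r (s + 1) 1 k q
        = (if k = q then ((if p = q then (1 : ℂ) else 0) +
            (if (p : ℕ) = (q : ℕ) + 1 ∧ (p : ℕ) ≤ s then 1 else 0)) else 0)
          + (if k = ⟨s + 1, by omega⟩ then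
              (if (q : ℕ) + 1 = s + 1 then
                ((if p = k then (1 : ℂ) else 0) +
                  (if (p : ℕ) = (k : ℕ) + 1 ∧ (p : ℕ) ≤ s then 1 else 0)) else 0) else 0) := by
      intro k
      unfold ElowA
      simp only [Matrix.of_apply]
      rw [mul_add]
      congr 1
      · by_cases hkq : k = q
        · subst hkq; simp
        · simp [hkq]
      · by_cases hk : k = (⟨s + 1, by omega⟩ : Fin (r + 1))
        · subst hk
          by_cases hq : (q : ℕ) + 1 = s + 1 <;> simp [hq, hK]
        · have : (k : ℕ) ≠ s + 1 := fun h => hk (Fin.ext h)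
          simp [hk, this]
    rw [Finset.sum_congr rfl (fun k _ => hsummand k), Finset.sum_add_distrib,
      Finset.sum_ite_eq' Finset.univ q, Finset.sum_ite_eq' Finset.univ (⟨s + 1, by omega⟩ : Fin (r + 1))]
    simp only [Finset.mem_univ, if_true, Matrix.of_apply, hK]
    have hpv := p.isLt
    have hqv := q.isLt
    simp only [Fin.ext_iff]
    split_ifs
    all_goals try (exfalso; omega)
    all_goals norm_num

lemma upProd (r : ℕ) (c : ℕ → ℂ) : ∀ s, s ≤ r →
    (((List.range s).map fun m => EupA r (m + 1) (c (m + 1))).prod) =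
      Matrix.of (fun p q : Fin (r + 1) =>
        if p = q then (1 : ℂ) else
          if (p : ℕ) < (q : ℕ) ∧ (q : ℕ) ≤ s then ∏ m ∈ Finset.Ico (p : ℕ) (q : ℕ), c (m + 1)
          else 0) := by
  intro s
  induction s with
  | zero =>
    intro _
    ext p q
    simp only [List.range_zero, List.map_nil, List.prod_nil, Matrix.one_apply, Matrix.of_apply]
    have : ¬((p : ℕ) < (q : ℕ) ∧ (q : ℕ) ≤ 0) := by omega
    rw [if_neg this]
  | succ s ih =>
    intro hs
    rw [List.range_succ, List.map_append, List.prod_append, List.map_singleton,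
      List.prod_singleton, ih (by omega)]
    ext p q
    rw [Matrix.mul_apply]
    set K : Fin (r + 1) := ⟨s, by omega⟩ with hKdef
    have hK : (K : ℕ) = s := rfl
    set U : Matrix (Fin (r + 1)) (Fin (r + 1)) ℂ := Matrix.of (fun p q : Fin (r + 1) =>
        if p = q then (1 : ℂ) else
          if (p : ℕ) < (q : ℕ) ∧ (q : ℕ) ≤ s then ∏ m ∈ Finset.Ico (p : ℕ) (q : ℕ), c (m + 1)
          else 0) with hU
    have hsummand : ∀ k : Fin (r + 1),
        U p k * EupA r (s + 1) (c (s + 1)) k q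
        = (if k = q then U p k else 0)
          + (if k = K then (if (q : ℕ) = s + 1 then U p k * c (s + 1) else 0) else 0) := by
      intro k
      unfold EupA
      simp only [Matrix.of_apply]
      rw [mul_add]
      congr 1
      · by_cases hkq : k = q
        · subst hkq; simp
        · simp [hkq]
      · by_cases hk : k = K
        · subst hk
          by_cases hq : (q : ℕ) = s + 1 <;> simp [hq, hK]
        · have : (k : ℕ) + 1 ≠ s + 1 := fun h => hk (Fin.ext (by omega))
          simp [hk, this, show (k : ℕ) ≠ s by omega]
    rw [Finset.sum_congr rfl (fun k _ => hsummand k), Finset.sum_add_distrib,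
      Finset.sum_ite_eq' Finset.univ q, Finset.sum_ite_eq' Finset.univ K]
    simp only [Finset.mem_univ, if_true]
    rw [hU]
    simp only [Matrix.of_apply, Fin.ext_iff, hK]
    have hpv := p.isLt
    have hqv := q.isLt
    split_ifs
    all_goals try (exfalso; omega)
    all_goals try norm_num
    all_goals (
      first
      | (have hq' : (q : ℕ) = s + 1 := by omega
         have hp' : (p : ℕ) < s := by omega
         rw [hq', Finset.prod_Ico_succ_top (le_of_lt hp')])
      | (have hq' : (q : ℕ) = s + 1 := by omega
         have hp2 : (p : ℕ) = s := by omega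
         rw [hq', hp2, Finset.prod_Ico_succ_top (le_refl s), Finset.Ico_self,
           Finset.prod_empty, one_mul]))


lemma Mprodentries (r : ℕ) (t c : ℕ → ℂ) (p q : Fin (r + 1)) :
    (((List.range r).map fun m => ElowA r (m + 1) 1).prod * DA r t *
        ((List.range r).map fun m => EupA r (m + 1) (c (m + 1))).prod) p q
      = MentN t c (p : ℕ) (q : ℕ) := by
  rw [lowProd r r le_rfl, upProd r c r le_rfl]
  set L : Matrix (Fin (r + 1)) (Fin (r + 1)) ℂ := Matrix.of (fun p q : Fin (r + 1) =>
      (if p = q then (1 : ℂ) else 0) +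
        (if (p : ℕ) = (q : ℕ) + 1 ∧ (p : ℕ) ≤ r then 1 else 0)) with hL
  set U : Matrix (Fin (r + 1)) (Fin (r + 1)) ℂ := Matrix.of (fun p q : Fin (r + 1) =>
      if p = q then (1 : ℂ) else
        if (p : ℕ) < (q : ℕ) ∧ (q : ℕ) ≤ r then ∏ m ∈ Finset.Ico (p : ℕ) (q : ℕ), c (m + 1)
        else 0) with hU
  have hpv := p.isLt
  have hqv := q.isLt
  -- U entries in merged form
  have hUval : ∀ a b : Fin (r + 1), U a b =
      if (a : ℕ) ≤ (b : ℕ) then ∏ m ∈ Finset.Ico (a : ℕ) (b : ℕ), c (m + 1) else 0 := by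
    intro a b
    have hav := a.isLt
    have hbv := b.isLt
    rw [hU]
    simp only [Matrix.of_apply]
    by_cases hab : a = b
    · subst hab
      rw [if_pos rfl, if_pos le_rfl, Finset.Ico_self, Finset.prod_empty]
    · have hab' : (a : ℕ) ≠ (b : ℕ) := fun h => hab (Fin.ext h)
      rw [if_neg hab]
      by_cases hlt : (a : ℕ) < (b : ℕ)
      · rw [if_pos ⟨hlt, by omega⟩, if_pos (by omega)]
      · rw [if_neg (by omega), if_neg (by omega)]
  rw [Matrix.mul_apply]
  have hLD : ∀ k : Fin (r + 1), (L * DA r t) p k = L p k * (t ((k : ℕ) + 1) / t (k : ℕ)) := by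
    intro k
    rw [DA, Matrix.mul_diagonal]
  by_cases hp0 : (p : ℕ) = 0
  · -- first row: only the diagonal term of L
    have hLp : ∀ k : Fin (r + 1), L p k = if k = p then 1 else 0 := by
      intro k
      rw [hL]
      simp only [Matrix.of_apply]
      have h2 : ¬((p : ℕ) = (k : ℕ) + 1 ∧ (p : ℕ) ≤ r) := by omega
      rw [if_neg h2, add_zero]
      by_cases h : p = k
      · subst h; rw [if_pos rfl]
      · rw [if_neg h, if_neg (fun hh => h (hh.symm))]
    have hsum : ∀ k : Fin (r + 1), L p k * (t ((k : ℕ) + 1) / t (k : ℕ)) * U k q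
        = (if k = p then (t ((k : ℕ) + 1) / t (k : ℕ)) * U k q else 0) := by
      intro k
      rw [hLp k]
      by_cases h1 : k = p
      · subst h1; simp
      · simp [h1]
    rw [Finset.sum_congr rfl (fun k _ => by rw [hLD k, hsum k])]
    rw [Finset.sum_ite_eq' Finset.univ p]
    simp only [Finset.mem_univ, if_true]
    rw [hUval p q, if_pos (by omega)]
    unfold MentN
    have h1 : ¬((p : ℕ) = (q : ℕ) + 1) := by omega
    rw [if_neg h1, if_pos (show (p : ℕ) ≤ (q : ℕ) by omega), if_pos hp0, hp0]
    ring
  · -- p ≥ 1 : diagonal and subdiagonal terms of L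
    set P' : Fin (r + 1) := ⟨(p : ℕ) - 1, by omega⟩ with hP'
    have hP'val : (P' : ℕ) = (p : ℕ) - 1 := rfl
    have hLp : ∀ k : Fin (r + 1), L p k =
        (if k = p then 1 else 0) + (if k = P' then 1 else 0) := by
      intro k
      rw [hL]
      simp only [Matrix.of_apply]
      congr 1
      · by_cases h : p = k
        · subst h; rw [if_pos rfl]
        · rw [if_neg h, if_neg (fun hh => h hh.symm)]
      · by_cases h : k = P'
        · subst h; rw [if_pos ⟨by omega, by omega⟩, if_pos rfl]
        · rw [if_neg (fun hh => h (Fin.ext (by omega))), if_neg h]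
    have hnePP : p ≠ P' := fun h => by
      have : (p : ℕ) = (P' : ℕ) := congrArg Fin.val h
      omega
    have hsum : ∀ k : Fin (r + 1), L p k * (t ((k : ℕ) + 1) / t (k : ℕ)) * U k q
        = (if k = p then (t ((k : ℕ) + 1) / t (k : ℕ)) * U k q else 0)
          + (if k = P' then (t ((k : ℕ) + 1) / t (k : ℕ)) * U k q else 0) := by
      intro k
      rw [hLp k]
      by_cases h1 : k = p
      · subst h1; simp [hnePP]
      · by_cases h2 : k = P'
        · subst h2; simp [h1]
        · simp [h1, h2]
    rw [Finset.sum_congr rfl (fun k _ => by rw [hLD k, hsum k])]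
    rw [Finset.sum_add_distrib, Finset.sum_ite_eq' Finset.univ p,
      Finset.sum_ite_eq' Finset.univ P']
    simp only [Finset.mem_univ, if_true]
    rw [hUval p q, hUval P' q]
    have hsucc : (P' : ℕ) + 1 = (p : ℕ) := by omega
    rw [hP'val, hsucc]
    by_cases hcase : (q : ℕ) + 1 < (p : ℕ)
    · rw [if_neg (by omega), if_neg (by omega), MentN_zero t c hcase]
      ring
    · by_cases hsub : (p : ℕ) = (q : ℕ) + 1
      · rw [if_neg (by omega), if_pos (by omega)]
        have : (p : ℕ) - 1 = (q : ℕ) := by omega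
        rw [this, Finset.Ico_self, Finset.prod_empty, hsub, MentN_sub]
        ring
      · have hle : (p : ℕ) ≤ (q : ℕ) := by omega
        rw [if_pos hle, if_pos (by omega)]
        rw [MentN_le t c hle, if_neg hp0]
        have hbot : ∏ m ∈ Finset.Ico ((p : ℕ) - 1) (q : ℕ), c (m + 1)
            = c (p : ℕ) * ∏ m ∈ Finset.Ico (p : ℕ) (q : ℕ), c (m + 1) := by
          rw [Finset.prod_eq_prod_Ico_succ_bot (by omega : (p : ℕ) - 1 < (q : ℕ))]
          rw [hsucc]
        rw [hbot]
        ring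

def phiMap (r : ℕ) (x : Σ _ : Finset (Fin (r + 1)), Finset (Fin (r + 1))) : Finset ℕ :=
  x.2.image (fun p : Fin (r + 1) => 2 * (p : ℕ)) ∪
    (x.1 \ x.2).image (fun p : Fin (r + 1) => 2 * (p : ℕ) + 1)

def psiMap (r : ℕ) (T : Finset ℕ) : Σ _ : Finset (Fin (r + 1)), Finset (Fin (r + 1)) :=
  ⟨Finset.univ.filter (fun p => 2 * (p : ℕ) ∈ T ∨ 2 * (p : ℕ) + 1 ∈ T),
   Finset.univ.filter (fun p => 2 * (p : ℕ) ∈ T)⟩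

lemma mem_phi (r : ℕ) (x : Σ _ : Finset (Fin (r + 1)), Finset (Fin (r + 1))) (m : ℕ) :
    m ∈ phiMap r x ↔
      (∃ p ∈ x.2, 2 * (p : ℕ) = m) ∨ (∃ p ∈ x.1 \ x.2, 2 * (p : ℕ) + 1 = m) := by
  unfold phiMap
  simp [Finset.mem_union, Finset.mem_image]

lemma mem_phi_even (r : ℕ) (x : Σ _ : Finset (Fin (r + 1)), Finset (Fin (r + 1)))
    (p : Fin (r + 1)) : 2 * (p : ℕ) ∈ phiMap r x ↔ p ∈ x.2 := by
  rw [mem_phi]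
  constructor
  · rintro (⟨q, hq, he⟩ | ⟨q, hq, he⟩)
    · rwa [show q = p from Fin.ext (by omega)] at hq
    · omega
  · intro hp
    exact Or.inl ⟨p, hp, rfl⟩

lemma mem_phi_odd (r : ℕ) (x : Σ _ : Finset (Fin (r + 1)), Finset (Fin (r + 1)))
    (p : Fin (r + 1)) : 2 * (p : ℕ) + 1 ∈ phiMap r x ↔ p ∈ x.1 \ x.2 := by
  rw [mem_phi]
  constructor
  · rintro (⟨q, hq, he⟩ | ⟨q, hq, he⟩)
    · omega
    · rwa [show q = p from Fin.ext (by omega)] at hq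
  · intro hp
    exact Or.inr ⟨p, hp, rfl⟩

lemma inj_even (r : ℕ) : Function.Injective (fun p : Fin (r + 1) => 2 * (p : ℕ)) := by
  intro a b h
  simp only at h
  exact Fin.ext (by omega)

lemma inj_odd (r : ℕ) : Function.Injective (fun p : Fin (r + 1) => 2 * (p : ℕ) + 1) := by
  intro a b h
  simp only at h
  exact Fin.ext (by omega)

lemma disj_phi (r : ℕ) (A B : Finset (Fin (r + 1))) :
    Disjoint (A.image (fun p : Fin (r + 1) => 2 * (p : ℕ)))
      (B.image (fun p : Fin (r + 1) => 2 * (p : ℕ) + 1)) := by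
  rw [Finset.disjoint_left]
  intro a ha hb
  obtain ⟨p, _, hp⟩ := Finset.mem_image.mp ha
  obtain ⟨q, _, hq⟩ := Finset.mem_image.mp hb
  omega

lemma card_phi (r : ℕ) (x : Σ _ : Finset (Fin (r + 1)), Finset (Fin (r + 1)))
    (h : x.2 ⊆ x.1) : (phiMap r x).card = x.1.card := by
  unfold phiMap
  rw [Finset.card_union_of_disjoint (disj_phi r _ _)]
  rw [Finset.card_image_of_injective _ (inj_even r)]
  rw [Finset.card_image_of_injective _ (inj_odd r)]
  rw [Finset.card_sdiff_of_subset h]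
  have := Finset.card_le_card h
  omega


lemma phi_mem_TS (r j : ℕ) (x : Σ _ : Finset (Fin (r + 1)), Finset (Fin (r + 1)))
    (hcard : x.1.card = j) (hsub : x.2 ⊆ x.1)
    (hP : ∀ p ∈ x.2, 0 < (p : ℕ) ∧ ∀ a ∈ x.1, (a : ℕ) + 1 ≠ (p : ℕ)) :
    phiMap r x ∈ ((Finset.Icc 1 (2 * r + 1)).powersetCard j).filter AdmissibleA := by
  rw [Finset.mem_filter, Finset.mem_powersetCard]
  refine ⟨⟨?_, by rw [card_phi r x hsub, hcard]⟩, ?_⟩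
  · intro m hm
    rw [Finset.mem_Icc]
    rcases (mem_phi r x m).mp hm with ⟨p, hp, he⟩ | ⟨p, hp, he⟩
    · have h1 := (hP p hp).1
      have h2 := p.isLt
      omega
    · have h2 := p.isLt
      omega
  · intro a ha b hb hab
    rcases (mem_phi r x a).mp ha with ⟨p, hp, hep⟩ | ⟨p, hp, hep⟩ <;>
      rcases (mem_phi r x b).mp hb with ⟨q, hq, heq⟩ | ⟨q, hq, heq⟩
    · -- a = 2p, b = 2q, both in x.2
      have hq2 := (hP q hq).2 p (hsub hp)
      have hpq : (p : ℕ) < (q : ℕ) := by omega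
      constructor
      · omega
      · intro _; omega
    · -- a = 2p (p ∈ x.2), b = 2q+1 (q ∈ x.1 \ x.2)
      have hq' := Finset.mem_sdiff.mp hq
      have hne : (p : ℕ) ≠ (q : ℕ) := fun h => hq'.2 ((Fin.ext h : p = q) ▸ hp)
      constructor
      · omega
      · intro _; omega
    · -- a = 2p+1 (p ∈ x.1\x.2), b = 2q (q ∈ x.2)
      have hp' := Finset.mem_sdiff.mp hp
      have hq2 := (hP q hq).2 p hp'.1
      constructor
      · omega
      · intro he
        obtain ⟨k, hk⟩ := he
        omega
    · -- both odd
      have hp' := Finset.mem_sdiff.mp hp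
      have hq' := Finset.mem_sdiff.mp hq
      constructor
      · omega
      · intro he
        obtain ⟨k, hk⟩ := he
        omega

lemma phi_psi (r : ℕ) (T : Finset ℕ) (hsub : T ⊆ Finset.Icc 1 (2 * r + 1))
    (hadm : AdmissibleA T) : phiMap r (psiMap r T) = T := by
  ext m
  rw [mem_phi]
  unfold psiMap
  simp only [Finset.mem_sdiff, Finset.mem_filter, Finset.mem_univ, true_and]
  constructor
  · rintro (⟨p, hp, he⟩ | ⟨p, ⟨hp1, hp2⟩, he⟩)
    · rwa [← he]
    · rcases hp1 with h | h
      · exact absurd h hp2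
      · rwa [← he]
  · intro hm
    have hbounds := Finset.mem_Icc.mp (hsub hm)
    rcases Nat.even_or_odd m with he | ho
    · obtain ⟨k, hk⟩ := he
      have hkr : k < r + 1 := by omega
      refine Or.inl ⟨⟨k, hkr⟩, ?_, by simp; omega⟩
      show 2 * ((⟨k, hkr⟩ : Fin (r + 1)) : ℕ) ∈ T
      simp only []
      rw [show 2 * k = m by omega]
      exact hm
    · obtain ⟨k, hk⟩ := ho
      have hkr : k < r + 1 := by omega
      refine Or.inr ⟨⟨k, hkr⟩, ⟨?_, ?_⟩, by simp; omega⟩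
      · refine Or.inr ?_
        show 2 * k + 1 ∈ T
        rw [show 2 * k + 1 = m by omega]
        exact hm
      · show ¬ (2 * k ∈ T)
        intro h2k
        have := hadm (2 * k) h2k (2 * k + 1) (by rw [← hk]; exact hm) (by omega)
        omega

lemma psi_phi (r : ℕ) (x : Σ _ : Finset (Fin (r + 1)), Finset (Fin (r + 1)))
    (hsub : x.2 ⊆ x.1) : psiMap r (phiMap r x) = x := by
  obtain ⟨S, E⟩ := x
  have hE : Finset.univ.filter (fun p : Fin (r + 1) => 2 * (p : ℕ) ∈ phiMap r ⟨S, E⟩) = E := by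
    ext p
    rw [Finset.mem_filter]
    rw [mem_phi_even r ⟨S, E⟩ p]
    simp
  have hS : Finset.univ.filter
      (fun p : Fin (r + 1) => 2 * (p : ℕ) ∈ phiMap r ⟨S, E⟩ ∨ 2 * (p : ℕ) + 1 ∈ phiMap r ⟨S, E⟩)
        = S := by
    ext p
    rw [Finset.mem_filter]
    rw [mem_phi_even r ⟨S, E⟩ p, mem_phi_odd r ⟨S, E⟩ p]
    simp only [Finset.mem_univ, true_and, Finset.mem_sdiff]
    constructor
    · rintro (h | h)
      · exact hsub h
      · exact h.1
    · intro h
      by_cases hE' : p ∈ E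
      · exact Or.inl hE'
      · exact Or.inr ⟨h, hE'⟩
  unfold psiMap
  exact Sigma.ext hS (heq_of_eq hE)

lemma psi_mem (r j : ℕ) (T : Finset ℕ)
    (hT : T ∈ ((Finset.Icc 1 (2 * r + 1)).powersetCard j).filter AdmissibleA) :
    ((psiMap r T).fst.card = j ∧ (psiMap r T).snd ⊆ (psiMap r T).fst) ∧
      (∀ p ∈ (psiMap r T).snd, 0 < (p : ℕ) ∧ ∀ a ∈ (psiMap r T).fst, (a : ℕ) + 1 ≠ (p : ℕ)) := by
  simp only [Finset.mem_filter, Finset.mem_powersetCard] at hT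
  obtain ⟨⟨hsub, hcard⟩, hadm⟩ := hT
  have hsub2 : (psiMap r T).snd ⊆ (psiMap r T).fst := by
    intro p hp
    simp only [psiMap, Finset.mem_filter] at hp ⊢
    exact ⟨hp.1, Or.inl hp.2⟩
  refine ⟨⟨?_, hsub2⟩, ?_⟩
  · have h1 := card_phi r (psiMap r T) hsub2
    rw [phi_psi r T hsub hadm] at h1
    omega
  · intro p hp
    simp only [psiMap, Finset.mem_filter] at hp
    have hpT : 2 * (p : ℕ) ∈ T := hp.2
    have hb := Finset.mem_Icc.mp (hsub hpT)
    refine ⟨by omega, ?_⟩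
    intro a ha heq
    simp only [psiMap, Finset.mem_filter] at ha
    rcases ha.2 with h | h
    · have := hadm (2 * (a : ℕ)) h (2 * (p : ℕ)) hpT (by omega)
      have heven : Even (2 * (a : ℕ)) := ⟨(a : ℕ), by omega⟩
      have := this.2 heven
      omega
    · have := (hadm (2 * (a : ℕ) + 1) h (2 * (p : ℕ)) hpT (by omega)).1
      omega

lemma comb (r j : ℕ) (t c y : ℕ → ℂ)
    (hyodd : ∀ i, 1 ≤ i → i ≤ r + 1 → y (2 * i - 1) = t i / t (i - 1))
    (hyeven : ∀ i, 1 ≤ i → i ≤ r → y (2 * i) = c i * t i / t (i - 1)) :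
    (∑ S ∈ (Finset.univ : Finset (Fin (r + 1))).powersetCard j,
      ∏ p ∈ S, ((if 0 < (p : ℕ) ∧ ∀ a ∈ S, (a : ℕ) + 1 ≠ (p : ℕ)
          then c (p : ℕ) * t (p : ℕ) / t ((p : ℕ) - 1) else 0) + t ((p : ℕ) + 1) / t (p : ℕ)))
      = ∑ T ∈ ((Finset.Icc 1 (2 * r + 1)).powersetCard j).filter AdmissibleA, ∏ i ∈ T, y i := by
  -- expand each product over choices of subsets E ⊆ S
  have hexp : ∀ S ∈ (Finset.univ : Finset (Fin (r + 1))).powersetCard j,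
      (∏ p ∈ S, ((if 0 < (p : ℕ) ∧ ∀ a ∈ S, (a : ℕ) + 1 ≠ (p : ℕ)
          then c (p : ℕ) * t (p : ℕ) / t ((p : ℕ) - 1) else 0) + t ((p : ℕ) + 1) / t (p : ℕ)))
        = ∑ E ∈ S.powerset,
            if (∀ p ∈ E, 0 < (p : ℕ) ∧ ∀ a ∈ S, (a : ℕ) + 1 ≠ (p : ℕ))
            then (∏ p ∈ E, c (p : ℕ) * t (p : ℕ) / t ((p : ℕ) - 1)) *
              ∏ p ∈ S \ E, t ((p : ℕ) + 1) / t (p : ℕ)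
            else 0 := by
    intro S _
    rw [Finset.prod_add]
    apply Finset.sum_congr rfl
    intro E hE
    by_cases hall : ∀ p ∈ E, 0 < (p : ℕ) ∧ ∀ a ∈ S, (a : ℕ) + 1 ≠ (p : ℕ)
    · rw [if_pos hall, Finset.prod_congr rfl (fun p hp => if_pos (hall p hp))]
    · rw [if_neg hall]
      obtain ⟨p, hnp⟩ := not_forall.mp hall
      obtain ⟨hp, hnot⟩ := Classical.not_imp.mp hnp
      have h0 : (if 0 < (p : ℕ) ∧ ∀ a ∈ S, (a : ℕ) + 1 ≠ (p : ℕ)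
          then c (p : ℕ) * t (p : ℕ) / t ((p : ℕ) - 1) else (0 : ℂ)) = 0 := if_neg hnot
      rw [Finset.prod_eq_zero hp h0, zero_mul]
  rw [Finset.sum_congr rfl hexp, Finset.sum_sigma', ← Finset.sum_filter]
  apply Finset.sum_nbij' (phiMap r) (psiMap r)
  · -- maps into target
    intro x hx
    simp only [Finset.mem_filter, Finset.mem_sigma, Finset.mem_powersetCard_univ,
      Finset.mem_powerset] at hx
    exact phi_mem_TS r j x hx.1.1 hx.1.2 hx.2
  · -- inverse maps into source
    intro T hT
    have h := psi_mem r j T hT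
    simp only [Finset.mem_filter, Finset.mem_sigma, Finset.mem_powersetCard_univ,
      Finset.mem_powerset]
    exact ⟨⟨h.1.1, h.1.2⟩, h.2⟩
  · -- left inverse
    intro x hx
    simp only [Finset.mem_filter, Finset.mem_sigma, Finset.mem_powersetCard_univ,
      Finset.mem_powerset] at hx
    exact psi_phi r x hx.1.2
  · -- right inverse
    intro T hT
    simp only [Finset.mem_filter, Finset.mem_powersetCard] at hT
    exact phi_psi r T hT.1.1 hT.2
  · -- values agree
    intro x hx
    simp only [Finset.mem_filter, Finset.mem_sigma, Finset.mem_powersetCard_univ,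
      Finset.mem_powerset] at hx
    unfold phiMap
    rw [Finset.prod_union (disj_phi r _ _),
      Finset.prod_image (fun a _ b _ h => inj_even r h),
      Finset.prod_image (fun a _ b _ h => inj_odd r h)]
    congr 1
    · apply Finset.prod_congr rfl
      intro p hp
      have h1 := (hx.2 p hp).1
      have h2 := p.isLt
      exact (hyeven (p : ℕ) (by omega) (by omega)).symm
    · apply Finset.prod_congr rfl
      intro p hp
      have h2 := p.isLt
      have h := hyodd ((p : ℕ) + 1) (by omega) (by omega)
      rw [show 2 * ((p : ℕ) + 1) - 1 = 2 * (p : ℕ) + 1 by omega, Nat.add_sub_cancel] at h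
      exact h.symm


lemma pms_eq (n : ℕ) (t c : ℕ → ℂ) (j : ℕ) :
    principalMinorSum (Matrix.of fun p q : Fin n => MentN t c (p : ℕ) (q : ℕ)) j
      = ∑ S ∈ (Finset.univ : Finset (Fin n)).powersetCard j,
          ∏ p ∈ S, ((if 0 < (p : ℕ) ∧ ∀ a ∈ S, (a : ℕ) + 1 ≠ (p : ℕ)
              then c (p : ℕ) * t (p : ℕ) / t ((p : ℕ) - 1) else 0)
            + t ((p : ℕ) + 1) / t (p : ℕ)) := by
  unfold principalMinorSum
  apply Finset.sum_congr rfl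
  intro S hS
  have hcard : S.card = j := (Finset.mem_powersetCard.mp hS).2
  set e := S.orderIsoOfFin hcard with he
  set f : Fin j → Fin n := fun i => (e i : Fin n) with hf
  have hfmono : StrictMono f := fun a b hab => e.strictMono hab
  have hfval : StrictMono (fun i => ((f i : ℕ))) := fun a b hab => hfmono hab
  have hmem : ∀ i : Fin j, f i ∈ S := fun i => (e i).2
  have hsurj : ∀ p ∈ S, ∃ i : Fin j, f i = p := by
    intro p hp
    exact ⟨e.symm ⟨p, hp⟩, by simp [hf]⟩
  -- reindex the determinant
  have hdet : (((Matrix.of fun p q : Fin n => MentN t c (p : ℕ) (q : ℕ))).submatrix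
        (fun x : {a : Fin n // a ∈ S} => x.1) (fun x : {a : Fin n // a ∈ S} => x.1)).det
      = (Matrix.of fun i k : Fin j =>
          MentN t c ((f i : Fin n) : ℕ) ((f k : Fin n) : ℕ)).det := by
    rw [← Matrix.det_submatrix_equiv_self e.toEquiv]
    congr 1
  rw [hdet, detL t c j (fun i => ((f i : ℕ))) hfval]
  -- convert the product over Fin j into a product over S
  apply Finset.prod_bij (fun (i : Fin j) _ => f i)
  · intro i _
    exact hmem i
  · intro a _ b _ hab
    exact hfmono.injective hab
  · intro p hp
    obtain ⟨i, hi⟩ := hsurj p hp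
    exact ⟨i, Finset.mem_univ i, hi⟩
  · intro i _
    unfold wPMN
    congr 2
    · apply propext
      constructor
      · rintro ⟨h0, hk⟩
        refine ⟨h0, fun a ha hne => ?_⟩
        obtain ⟨k, hk'⟩ := hsurj a ha
        refine hk k ?_
        show ((f k : Fin n) : ℕ) + 1 = ((f i : Fin n) : ℕ)
        rw [hk']
        exact hne
      · rintro ⟨h0, hk⟩
        exact ⟨h0, fun k hne => hk (f k) (hmem k) hne⟩

/-- Theorem 5.8 (with Lemma 5.5 and Proposition 5.6): the type-`A` Coxeter–Toda Hamiltonian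
`f_j^{c,c} = tr(∧^j ·)` on the conjugation quotient Coxeter double Bruhat cell of `SL_{r+1}`
as a hard-particle partition function on the graph `𝒢_A`. -/
theorem stmt_0 (r : ℕ) (hr : 1 ≤ r) (t c : ℕ → ℂ)
    (ht0 : t 0 = 1) (htr1 : t (r + 1) = 1)
    (htne : ∀ i, 1 ≤ i → i ≤ r → t i ≠ 0)
    (hcne : ∀ i, 1 ≤ i → i ≤ r → c i ≠ 0)
    (y : ℕ → ℂ)
    (hyodd : ∀ i, 1 ≤ i → i ≤ r + 1 → y (2 * i - 1) = t i / t (i - 1))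
    (hyeven : ∀ i, 1 ≤ i → i ≤ r → y (2 * i) = c i * t i / t (i - 1))
    (M : Matrix (Fin (r + 1)) (Fin (r + 1)) ℂ)
    (hM : M = ((List.range r).map fun m => ElowA r (m + 1) 1).prod * DA r t *
        ((List.range r).map fun m => EupA r (m + 1) (c (m + 1))).prod)
    (j : ℕ) (hj1 : 1 ≤ j) (hj2 : j ≤ r) :
    principalMinorSum M j =
      ∑ S ∈ ((Finset.Icc 1 (2 * r + 1)).powersetCard j).filter AdmissibleA,
        ∏ i ∈ S, y i := by
  have hMent : M = Matrix.of fun p q : Fin (r + 1) => MentN t c (p : ℕ) (q : ℕ) := by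
    rw [hM]
    ext p q
    exact Mprodentries r t c p q
  rw [hMent, pms_eq (r + 1) t c j, comb r j t c y hyodd hyeven]
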